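/- (Determinant representation, trigonometric case, first form.) Let q ∈ ℂ with q ≠ 0 and q² ≠ 1, and let y_1,…,y_N ∈ ℂ be nonzero, pairwise distinct, and satisfy q² y_j ≠ y_k for all j ≠ k. Set ã(x) = ∏_{k=1}^N (q x − q^{−1} y_k) and d̃(x) = ∏_{k=1}^N (x − y_k). Let p_1,…,p_N ∈ ℂ[x] be polynomials of degree at most N−1 whose N×N coefficient matrix is invertible. Then there exists a polynomial P ∈ ℂ[x_1,…,x_N] satisfying the trigonometric DWBC conditions such that for all x_1,…,x_N ∈ ℂ: P(x_1,…,x_N) · (∏_{k=1}^N y_k) · det[ p_k(x_j) ]_{j,k=1,…,N} = det[ p_k(x_j) ã(x_j) − q^{−N+2} p_k(q² x_j) d̃(x_j) ]_{j,k=1,…,N}. -/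

import Mathlib

open scoped BigOperators

namespace SixVertexTrig

/-- A polynomial `P ∈ ℂ[x_1,…,x_N]` satisfies the trigonometric DWBC conditions if it is
symmetric, of degree at most `N-1` in each variable, vanishes whenever two of its
arguments equal `y_j` and `q⁻² y_j` (for some `j`), and takes the value
`(q - q⁻¹)^N ∏_{j≠k} (q y_j - q⁻¹ y_k)` at `x = y`.  (Since `P` is required to be
symmetric, the vanishing condition is phrased via an arbitrary pair of distinct
argument slots carrying the two values.) -/
def TrigCond (N : ℕ) (q : ℂ) (y : Fin N → ℂ) (P : MvPolynomial (Fin N) ℂ) : Prop :=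
  P.IsSymmetric ∧
  (∀ j : Fin N, P.degreeOf j ≤ N - 1) ∧
  (∀ (j : Fin N) (x : Fin N → ℂ) (i₁ i₂ : Fin N), i₁ ≠ i₂ →
    x i₁ = y j → x i₂ = (q ^ 2)⁻¹ * y j → MvPolynomial.eval x P = 0) ∧
  MvPolynomial.eval y P =
    (q - q⁻¹) ^ N * ∏ j, ∏ k ∈ Finset.univ.erase j, (q * y j - q⁻¹ * y k)

/-- The polynomial `p_i(x) = ∑_{j=1}^N p_{ij} x^{j-1}` of degree at most `N-1`,
determined by the row `i` of a coefficient matrix `p`. -/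
noncomputable def pval {N : ℕ} (p : Matrix (Fin N) (Fin N) ℂ) (i : Fin N) (x : ℂ) : ℂ :=
  ∑ j, p i j * x ^ (j : ℕ)

/-- `ã(x) = ∏_{k=1}^N (q x - q⁻¹ y_k)`. -/
noncomputable def aTil (N : ℕ) (q : ℂ) (y : Fin N → ℂ) (x : ℂ) : ℂ :=
  ∏ k, (q * x - q⁻¹ * y k)

/-- `d̃(x) = ∏_{k=1}^N (x - y_k)`. -/
noncomputable def dTil (N : ℕ) (y : Fin N → ℂ) (x : ℂ) : ℂ :=
  ∏ k, (x - y k)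

end SixVertexTrig

namespace SVTAux

open MvPolynomial

variable {N : ℕ}

/-- `ã` as a univariate polynomial. -/
noncomputable def Ap (N : ℕ) (q : ℂ) (y : Fin N → ℂ) : Polynomial ℂ :=
  ∏ m : Fin N, (Polynomial.C q * Polynomial.X - Polynomial.C (q⁻¹ * y m))

/-- `d̃` as a univariate polynomial. -/
noncomputable def Dp (N : ℕ) (y : Fin N → ℂ) : Polynomial ℂ :=
  ∏ m : Fin N, (Polynomial.X - Polynomial.C (y m))

noncomputable def cc (N : ℕ) (q : ℂ) (k : ℕ) : ℂ := q ^ (2 - (N : ℤ)) * q ^ (2 * k)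

noncomputable def gp (N : ℕ) (q : ℂ) (y : Fin N → ℂ) (k : ℕ) : Polynomial ℂ :=
  Polynomial.X ^ k * (Ap N q y - Polynomial.C (cc N q k) * Dp N y)

noncomputable def Dmat (N : ℕ) (q : ℂ) (y : Fin N → ℂ) :
    Matrix (Fin N) (Fin N) (MvPolynomial (Fin N) ℂ) :=
  Matrix.of fun j k => Polynomial.aeval (X j) (gp N q y (k : ℕ))

noncomputable def DD (N : ℕ) (q : ℂ) (y : Fin N → ℂ) : MvPolynomial (Fin N) ℂ :=
  (Dmat N q y).det

def SS (N : ℕ) : Finset (Σ _ : Fin N, Fin N) := Finset.univ.sigma fun i => Finset.Ioi i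

noncomputable def VV (N : ℕ) : MvPolynomial (Fin N) ℂ :=
  ∏ p ∈ SS N, (X p.2 - X p.1)

lemma mem_SS {p : Σ _ : Fin N, Fin N} : p ∈ SS N ↔ p.1 < p.2 := by
  simp [SS, Finset.mem_sigma]

lemma eval_aeval_X (x : Fin N → ℂ) (j : Fin N) (f : Polynomial ℂ) :
    eval x (Polynomial.aeval (X j : MvPolynomial (Fin N) ℂ) f) = Polynomial.eval (x j) f := by
  have h := Polynomial.aeval_algHom_apply (MvPolynomial.aeval x) (X j : MvPolynomial (Fin N) ℂ) f
  simp only [aeval_X] at h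
  have h1 : MvPolynomial.aeval x (Polynomial.aeval (X j : MvPolynomial (Fin N) ℂ) f)
      = eval x (Polynomial.aeval (X j : MvPolynomial (Fin N) ℂ) f) := by
    rw [← MvPolynomial.coe_aeval_eq_eval]; rfl
  rw [h1] at h
  rw [← h, Polynomial.aeval_def, ← Polynomial.eval_map]
  simp [Polynomial.map_id]

lemma hom_aeval_X (φ : MvPolynomial (Fin N) ℂ →ₐ[ℂ] MvPolynomial (Fin N) ℂ)
    (j : Fin N) (f : Polynomial ℂ) :
    φ (Polynomial.aeval (X j : MvPolynomial (Fin N) ℂ) f)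
      = Polynomial.aeval (φ (X j)) f :=
  (Polynomial.aeval_algHom_apply φ _ f).symm

lemma eval_DD (q : ℂ) (y : Fin N → ℂ) (x : Fin N → ℂ) :
    eval x (DD N q y) =
      Matrix.det (Matrix.of fun j k : Fin N => Polynomial.eval (x j) (gp N q y (k : ℕ))) := by
  rw [DD, RingHom.map_det]
  congr 1
  ext j k
  simp [Dmat, Matrix.map_apply, eval_aeval_X]


lemma eval_VV (x : Fin N → ℂ) :
    eval x (VV N) = (Matrix.vandermonde x).det := by
  rw [VV, map_prod]
  simp only [map_sub, eval_X]
  rw [SS, Matrix.det_vandermonde]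
  exact (Finset.prod_sigma' Finset.univ (fun i => Finset.Ioi i) (fun i j => x j - x i)).symm

/-- `X i - X j ≠ 0` for `i ≠ j`. -/
lemma X_sub_X_ne {i j : Fin N} (h : i ≠ j) :
    (X i - X j : MvPolynomial (Fin N) ℂ) ≠ 0 := by
  intro hc
  have := congrArg (eval (fun t => if t = i then (1:ℂ) else 0)) hc
  simp [h, Ne.symm h] at this

lemma X_sub_C_ne (i : Fin N) (a : ℂ) :
    (X i - C a : MvPolynomial (Fin N) ℂ) ≠ 0 := by
  intro hc
  have := congrArg (eval (fun _ => a + 1)) hc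
  simp at this

lemma C_sub_X_ne (i : Fin N) (a : ℂ) :
    (C a - X i : MvPolynomial (Fin N) ℂ) ≠ 0 := by
  intro hc
  have := congrArg (eval (fun _ => a + 1)) hc
  simp at this

lemma C_sub_C_ne {a b : ℂ} (h : a ≠ b) :
    (C a - C b : MvPolynomial (Fin N) ℂ) ≠ 0 := by
  rw [← C_sub]
  intro hc
  exact h (sub_eq_zero.mp (by exact_mod_cast (MvPolynomial.C_injective _ ℂ) (by simpa using hc)))

/-- substitution `X i ↦ X j` congruence: `X i - X j` divides `f - bind₁ upd f`. -/
lemma dvd_sub_bind (i j : Fin N) (f : MvPolynomial (Fin N) ℂ) :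
    (X i - X j : MvPolynomial (Fin N) ℂ) ∣
      f - bind₁ (Function.update X i (X j)) f := by
  induction f using MvPolynomial.induction_on with
  | C a => simp [bind₁_C_right]
  | add f g hf hg =>
      rw [map_add]
      have : f + g - (bind₁ (Function.update X i (X j)) f + bind₁ (Function.update X i (X j)) g)
          = (f - bind₁ (Function.update X i (X j)) f) + (g - bind₁ (Function.update X i (X j)) g) := by
        ring
      rw [this]
      exact dvd_add hf hg
  | mul_X f k hf =>
      rw [map_mul, bind₁_X_right]
      have hrw : f * X k - bind₁ (Function.update X i (X j)) f * Function.update X i (X j) k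
          = (f - bind₁ (Function.update X i (X j)) f) * X k
            + bind₁ (Function.update X i (X j)) f * (X k - Function.update X i (X j) k) := by
        ring
      rw [hrw]
      refine dvd_add (Dvd.dvd.mul_right hf _) (Dvd.dvd.mul_left ?_ _)
      rcases eq_or_ne k i with rfl | hk
      · simp [Function.update_self]
      · simp [Function.update_of_ne hk]

lemma dvd_of_bind_eq_zero {i j : Fin N} {f : MvPolynomial (Fin N) ℂ}
    (h : bind₁ (Function.update X i (X j)) f = 0) :
    (X i - X j : MvPolynomial (Fin N) ℂ) ∣ f := by
  have := dvd_sub_bind i j f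
  rwa [h, sub_zero] at this

lemma bind_update_X_sub_X (a b c d : Fin N) :
    bind₁ (Function.update X a (X b)) (X c - X d : MvPolynomial (Fin N) ℂ)
      = X (if c = a then b else c) - X (if d = a then b else d) := by
  simp [map_sub, bind₁_X_right, Function.update_apply]
  split_ifs <;> simp

/-- product of `X (b p) - X (a p)` divides an `f` killed by each substitution. -/
lemma prod_dvd {β : Type*} [DecidableEq β] (s : Finset β) (a b : β → Fin N)
    (hab : ∀ p ∈ s, a p < b p)
    (hinj : ∀ p ∈ s, ∀ r ∈ s, a p = a r → b p = b r → p = r)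
    (f : MvPolynomial (Fin N) ℂ)
    (hf : ∀ p ∈ s, bind₁ (Function.update X (a p) (X (b p))) f = 0) :
    (∏ p ∈ s, (X (b p) - X (a p) : MvPolynomial (Fin N) ℂ)) ∣ f := by
  classical
  induction s using Finset.induction_on generalizing f with
  | empty => simpa using one_dvd f
  | @insert p s hps ih =>
      have hdvd : (X (a p) - X (b p) : MvPolynomial (Fin N) ℂ) ∣ f :=
        dvd_of_bind_eq_zero (hf p (Finset.mem_insert_self p s))
      have hdvd' : (X (b p) - X (a p) : MvPolynomial (Fin N) ℂ) ∣ f := by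
        have : (X (b p) - X (a p) : MvPolynomial (Fin N) ℂ) = -(X (a p) - X (b p)) := by ring
        rw [this, neg_dvd]; exact hdvd
      obtain ⟨g, rfl⟩ := hdvd'
      rw [Finset.prod_insert hps]
      refine mul_dvd_mul_left _ (ih (fun r hr => hab r (Finset.mem_insert_of_mem hr))
        (fun r hr r' hr' => hinj r (Finset.mem_insert_of_mem hr) r' (Finset.mem_insert_of_mem hr'))
        g ?_)
      intro r hr
      have hzero := hf r (Finset.mem_insert_of_mem hr)
      rw [map_mul, bind_update_X_sub_X] at hzero
      have hne : (X (if b p = a r then b r else b p)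
          - X (if a p = a r then b r else a p) : MvPolynomial (Fin N) ℂ) ≠ 0 := by
        apply X_sub_X_ne
        have habp := hab p (Finset.mem_insert_self p s)
        have habr := hab r (Finset.mem_insert_of_mem hr)
        have hpr : p ≠ r := fun h => hps (h ▸ hr)
        split_ifs with h1 h2 h2
        · exact absurd (h1 ▸ h2 ▸ rfl : a p = b p) (ne_of_lt habp)
        · intro hc
          exact absurd (hc ▸ (h1 ▸ habr : b p < b r) : b p < a p) (not_lt_of_gt habp)
        · intro hc
          exact hpr (hinj p (Finset.mem_insert_self p s) r (Finset.mem_insert_of_mem hr) h2 hc)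
        · exact fun hc => (ne_of_lt habp) hc.symm
      exact (mul_eq_zero.mp hzero).resolve_left hne


lemma degreeOf_neg (i : Fin N) (f : MvPolynomial (Fin N) ℂ) :
    degreeOf i (-f) = degreeOf i f := by
  simp [degreeOf_eq_sup, support_neg]

lemma rename_ne_zero {f : MvPolynomial (Fin N) ℂ} (e : Equiv.Perm (Fin N)) (hf : f ≠ 0) :
    rename ⇑e f ≠ 0 := by
  intro h
  exact hf ((MvPolynomial.rename_injective _ e.injective) (by simpa using h))

lemma degreeOf_eq_swap (n : ℕ) (i : Fin (n+1)) (h : MvPolynomial (Fin (n+1)) ℂ) :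
    degreeOf i h = degreeOf 0 (rename ⇑(Equiv.swap 0 i) h) := by
  have hinj : Function.Injective ⇑(Equiv.swap 0 i) := (Equiv.swap 0 i).injective
  have key := MvPolynomial.degreeOf_rename_of_injective
    (p := rename ⇑(Equiv.swap 0 i) h) (f := ⇑(Equiv.swap 0 i)) hinj (i := 0)
  rw [rename_rename] at key
  have hcomp : (⇑(Equiv.swap 0 i) ∘ ⇑(Equiv.swap 0 i)) = id := by
    funext t; simp [Function.comp, Equiv.swap_apply_self]
  rw [hcomp, rename_id, Equiv.swap_apply_left] at key
  exact key

lemma degreeOf_mul_eq_add (hN : 1 ≤ N) (i : Fin N) {f g : MvPolynomial (Fin N) ℂ}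
    (hf : f ≠ 0) (hg : g ≠ 0) :
    degreeOf i (f * g) = degreeOf i f + degreeOf i g := by
  obtain ⟨n, rfl⟩ : ∃ n, N = n + 1 := ⟨N - 1, by omega⟩
  rw [degreeOf_eq_swap n i, degreeOf_eq_swap n i f, degreeOf_eq_swap n i g, map_mul]
  rw [← natDegree_finSuccEquiv, ← natDegree_finSuccEquiv, ← natDegree_finSuccEquiv, map_mul]
  exact Polynomial.natDegree_mul
    (by simpa using rename_ne_zero (Equiv.swap 0 i) hf)
    (by simpa using rename_ne_zero (Equiv.swap 0 i) hg)

lemma degreeOf_prod_eq (hN : 1 ≤ N) (i : Fin N) {β : Type*} (s : Finset β)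
    (h : β → MvPolynomial (Fin N) ℂ) (hnz : ∀ p ∈ s, h p ≠ 0) :
    degreeOf i (∏ p ∈ s, h p) = ∑ p ∈ s, degreeOf i (h p) := by
  classical
  induction s using Finset.induction_on with
  | empty => simpa using degreeOf_C (1:ℂ) i
  | @insert p s hps ih =>
      rcases Finset.eq_empty_or_nonempty s with rfl | hne
      · simpa using degreeOf_C (1:ℂ) i ▸ rfl
      · rw [Finset.prod_insert hps, Finset.sum_insert hps,
          degreeOf_mul_eq_add hN i (hnz p (Finset.mem_insert_self p s))
            (Finset.prod_ne_zero_iff.mpr fun r hr => hnz r (Finset.mem_insert_of_mem hr)),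
          ih (fun r hr => hnz r (Finset.mem_insert_of_mem hr))]

lemma degreeOf_aeval_le (i j : Fin N) (f : Polynomial ℂ) :
    degreeOf i (Polynomial.aeval (X j : MvPolynomial (Fin N) ℂ) f)
      ≤ if i = j then f.natDegree else 0 := by
  conv_lhs => rw [f.as_sum_support, map_sum]
  refine (degreeOf_sum_le _ _ _).trans (Finset.sup_le fun m hm => ?_)
  rw [Polynomial.aeval_monomial]
  refine (degreeOf_C_mul_le _ _ _).trans ?_
  refine (degreeOf_pow_le _ _ _).trans ?_
  rcases eq_or_ne i j with rfl | hij
  · simp only [if_pos rfl]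
    have : degreeOf i (X i : MvPolynomial (Fin N) ℂ) = 1 := by
      classical rw [degreeOf_X]; simp
    rw [this, mul_one]
    exact Polynomial.le_natDegree_of_mem_supp _ hm
  · have : degreeOf i (X j : MvPolynomial (Fin N) ℂ) = 0 := by
      classical rw [degreeOf_X]; simp [hij]
    simp [this, hij]


lemma natDegree_Ap_le (q : ℂ) (y : Fin N → ℂ) : (Ap N q y).natDegree ≤ N := by
  refine (Polynomial.natDegree_prod_le _ _).trans ?_
  refine le_trans (Finset.sum_le_sum (g := fun _ => 1) fun m _ => ?_) (by simp)
  refine (Polynomial.natDegree_sub_le _ _).trans (max_le ?_ ?_)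
  · exact (Polynomial.natDegree_C_mul_le _ _).trans (by simp)
  · exact (Polynomial.natDegree_C _).le.trans (by omega)

lemma natDegree_Dp_le (y : Fin N → ℂ) : (Dp N y).natDegree ≤ N := by
  refine (Polynomial.natDegree_prod_le _ _).trans ?_
  refine le_trans (Finset.sum_le_sum fun m _ =>
    le_of_eq (Polynomial.natDegree_X_sub_C (y m))) ?_
  simp

noncomputable def Ap' (N : ℕ) (q : ℂ) (y : Fin N → ℂ) : Polynomial ℂ :=
  ∏ m : Fin N, (Polynomial.X - Polynomial.C ((q ^ 2)⁻¹ * y m))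

lemma Ap_eq (q : ℂ) (hq : q ≠ 0) (y : Fin N → ℂ) :
    Ap N q y = Polynomial.C (q ^ N) * Ap' N q y := by
  rw [Ap, Ap']
  have : ∀ m : Fin N, Polynomial.C q * Polynomial.X - Polynomial.C (q⁻¹ * y m)
      = Polynomial.C q * (Polynomial.X - Polynomial.C ((q ^ 2)⁻¹ * y m)) := by
    intro m
    rw [mul_sub, ← Polynomial.C_mul]
    congr 2
    field_simp
  rw [Finset.prod_congr rfl fun m _ => this m, Finset.prod_mul_distrib]
  simp [map_pow]

lemma monic_Ap' (q : ℂ) (y : Fin N → ℂ) : (Ap' N q y).Monic :=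
  Polynomial.monic_prod_of_monic _ _ fun _ _ => Polynomial.monic_X_sub_C _

lemma monic_Dp (y : Fin N → ℂ) : (Dp N y).Monic :=
  Polynomial.monic_prod_of_monic _ _ fun _ _ => Polynomial.monic_X_sub_C _

lemma natDegree_Ap' (q : ℂ) (y : Fin N → ℂ) : (Ap' N q y).natDegree = N := by
  rw [Ap', Polynomial.natDegree_prod_of_monic _ _ fun _ _ => Polynomial.monic_X_sub_C _]
  simp only [Polynomial.natDegree_X_sub_C]
  simp

lemma natDegree_Dp (y : Fin N → ℂ) : (Dp N y).natDegree = N := by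
  rw [Dp, Polynomial.natDegree_prod_of_monic _ _ fun _ _ => Polynomial.monic_X_sub_C _]
  simp only [Polynomial.natDegree_X_sub_C]
  simp

lemma cc_top (hN : 1 ≤ N) (q : ℂ) (hq : q ≠ 0) : cc N q (N - 1) = q ^ N := by
  rw [cc, ← zpow_natCast q (2 * (N - 1)), ← zpow_add₀ hq, ← zpow_natCast q N]
  congr 1
  push_cast
  omega

lemma natDegree_gp_le (hN : 1 ≤ N) (q : ℂ) (hq : q ≠ 0) (y : Fin N → ℂ) (k : ℕ)
    (hk : k ≤ N - 1) : (gp N q y k).natDegree ≤ 2 * N - 2 := by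
  rw [gp]
  refine (Polynomial.natDegree_mul_le).trans ?_
  rw [Polynomial.natDegree_X_pow]
  rcases eq_or_ne k (N - 1) with rfl | hk'
  · rw [cc_top hN q hq, Ap_eq q hq y]
    have : Polynomial.C (q ^ N) * Ap' N q y - Polynomial.C (q ^ N) * Dp N y
        = Polynomial.C (q ^ N) * (Ap' N q y - Dp N y) := by ring
    rw [this]
    have hsub : (Ap' N q y - Dp N y).natDegree ≤ N - 1 := by
      refine Polynomial.natDegree_le_iff_coeff_eq_zero.mpr fun M hM => ?_
      rw [Polynomial.coeff_sub]
      have h1 : (Ap' N q y).coeff N = 1 := by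
        have := (monic_Ap' q y).coeff_natDegree (p := Ap' N q y)
        rwa [natDegree_Ap'] at this
      have h2 : (Dp N y).coeff N = 1 := by
        have := (monic_Dp y).coeff_natDegree (p := Dp N y)
        rwa [natDegree_Dp] at this
      rcases eq_or_ne M N with hMN | hMN
      · rw [hMN, h1, h2, sub_self]
      · have hMgt : N < M := by omega
        rw [Polynomial.coeff_eq_zero_of_natDegree_lt (by rw [natDegree_Ap']; exact hMgt),
          Polynomial.coeff_eq_zero_of_natDegree_lt (by rw [natDegree_Dp]; exact hMgt), sub_self]
    have := (Polynomial.natDegree_C_mul_le (q ^ N) (Ap' N q y - Dp N y)).trans hsub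
    omega
  · have hkN : k ≤ N - 2 := by omega
    have hsub : (Ap N q y - Polynomial.C (cc N q k) * Dp N y).natDegree ≤ N := by
      refine (Polynomial.natDegree_sub_le _ _).trans ?_
      refine max_le (natDegree_Ap_le q y) ?_
      exact (Polynomial.natDegree_C_mul_le _ _).trans (natDegree_Dp_le y)
    omega

lemma degreeOf_DD_le (hN : 1 ≤ N) (q : ℂ) (hq : q ≠ 0) (y : Fin N → ℂ) (i : Fin N) :
    degreeOf i (DD N q y) ≤ 2 * N - 2 := by
  classical
  rw [DD, Matrix.det_apply]
  refine (degreeOf_sum_le _ _ _).trans (Finset.sup_le fun σ _ => ?_)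
  have hsmul : degreeOf i (Equiv.Perm.sign σ • ∏ j, Dmat N q y (σ j) j)
      = degreeOf i (∏ j, Dmat N q y (σ j) j) := by
    rcases Int.units_eq_one_or (Equiv.Perm.sign σ) with h | h <;> rw [h]
    · rw [one_smul]
    · have : (-1 : ℤˣ) • (∏ j, Dmat N q y (σ j) j) = -(∏ j, Dmat N q y (σ j) j) := by
        simp
      rw [this, degreeOf_neg]
  rw [hsmul]
  refine (degreeOf_prod_le _ _ _).trans ?_
  have hbound : ∀ j : Fin N, degreeOf i (Dmat N q y (σ j) j)
      ≤ if i = σ j then 2 * N - 2 else 0 := by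
    intro j
    refine (degreeOf_aeval_le i (σ j) _).trans ?_
    split_ifs
    · exact natDegree_gp_le hN q hq y j (by have := j.isLt; omega)
    · exact le_rfl
  refine le_trans (Finset.sum_le_sum fun j _ => hbound j) ?_
  have hiff : ∀ j : Fin N, (if i = σ j then 2 * N - 2 else 0)
      = if j = σ.symm i then 2 * N - 2 else 0 := by
    intro j
    by_cases h : i = σ j
    · simp [h]
    · have h2 : j ≠ σ.symm i := fun hc => h (by simp [hc])
      simp [h, h2]
  rw [Finset.sum_congr rfl fun j _ => hiff j,
    Finset.sum_ite_eq' Finset.univ (σ.symm i) fun _ => 2 * N - 2]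
  simp


lemma VV_ne_zero : (VV N) ≠ 0 := by
  rw [VV]
  exact Finset.prod_ne_zero_iff.mpr fun p hp => X_sub_X_ne (ne_of_gt (mem_SS.mp hp))

lemma degreeOf_X_sub_X {i a b : Fin N} (hab : a ≠ b) :
    degreeOf i (X a - X b : MvPolynomial (Fin N) ℂ) = if i = a ∨ i = b then 1 else 0 := by
  classical
  refine le_antisymm ?_ ?_
  · rw [sub_eq_add_neg]
    refine (degreeOf_add_le _ _ _).trans ?_
    rw [degreeOf_neg, degreeOf_X, degreeOf_X]
    split_ifs with h1 h2 h3 h4 h5 <;> simp_all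
  · split_ifs with h
    · refine le_trans ?_ (monomial_le_degreeOf i (m := Finsupp.single i 1) ?_)
      · simp
      · rw [mem_support_iff, coeff_sub, coeff_X', coeff_X']
        have hne : ¬(a = b) := hab
        rcases h with rfl | rfl
        · rw [if_pos rfl, if_neg (by
            intro hc
            exact hab (by
              have := Finsupp.single_left_injective (α := Fin N) (one_ne_zero (α := ℕ)) hc
              exact this.symm))]
          norm_num
        · rw [if_neg (by
            intro hc
            exact hab (Finsupp.single_left_injective (α := Fin N) (one_ne_zero (α := ℕ)) hc)),
            if_pos rfl]
          norm_num
    · exact Nat.zero_le _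

lemma card_SS_filter (hN : 1 ≤ N) (i : Fin N) :
    ((SS N).filter (fun p => i = p.1 ∨ i = p.2)).card = N - 1 := by
  classical
  rw [Finset.filter_or, Finset.card_union_of_disjoint]
  · have h1 : ((SS N).filter fun p => i = p.1).card = (Finset.Ioi i).card := by
      refine Finset.card_bij' (fun p _ => p.2) (fun b _ => ⟨i, b⟩) ?_ ?_ ?_ ?_
      · intro p hp
        rcases Finset.mem_filter.mp hp with ⟨hp1, hp2⟩
        rw [mem_SS] at hp1
        rw [Finset.mem_Ioi]
        exact hp2 ▸ hp1
      · intro b hb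
        refine Finset.mem_filter.mpr ⟨mem_SS.mpr ?_, rfl⟩
        exact Finset.mem_Ioi.mp hb
      · intro p hp
        rcases Finset.mem_filter.mp hp with ⟨_, hp2⟩
        obtain ⟨a, b⟩ := p
        cases hp2
        rfl
      · intro b hb
        rfl
    have h2 : ((SS N).filter fun p => i = p.2).card = (Finset.Iio i).card := by
      refine Finset.card_bij' (fun p _ => p.1) (fun b _ => ⟨b, i⟩) ?_ ?_ ?_ ?_
      · intro p hp
        rcases Finset.mem_filter.mp hp with ⟨hp1, hp2⟩
        rw [mem_SS] at hp1
        rw [Finset.mem_Iio]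
        exact hp2 ▸ hp1
      · intro b hb
        refine Finset.mem_filter.mpr ⟨mem_SS.mpr ?_, rfl⟩
        exact Finset.mem_Iio.mp hb
      · intro p hp
        rcases Finset.mem_filter.mp hp with ⟨_, hp2⟩
        obtain ⟨a, b⟩ := p
        cases hp2
        rfl
      · intro b hb
        rfl
    rw [h1, h2, Fin.card_Ioi, Fin.card_Iio]
    have := i.isLt
    omega
  · rw [Finset.disjoint_filter]
    intro p hp h1 h2
    have hlt := mem_SS.mp hp
    rw [← h1, ← h2] at hlt
    exact lt_irrefl i hlt

lemma degreeOf_VV (hN : 1 ≤ N) (i : Fin N) : degreeOf i (VV N) = N - 1 := by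
  classical
  rw [VV, degreeOf_prod_eq hN i _ _ (fun p hp => X_sub_X_ne (ne_of_gt (mem_SS.mp hp)))]
  have : ∀ p ∈ SS N, degreeOf i (X p.2 - X p.1 : MvPolynomial (Fin N) ℂ)
      = if i = p.1 ∨ i = p.2 then 1 else 0 := by
    intro p hp
    rw [degreeOf_X_sub_X (ne_of_gt (mem_SS.mp hp))]
    congr 1
    simp [or_comm]
  rw [Finset.sum_congr rfl this, Finset.sum_boole]
  simpa using card_SS_filter hN i


lemma eval_gp (q : ℂ) (y : Fin N → ℂ) (k : ℕ) (t : ℂ) :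
    Polynomial.eval t (gp N q y k)
      = t ^ k * ((∏ m, (q * t - q⁻¹ * y m)) - cc N q k * ∏ m, (t - y m)) := by
  simp [gp, Ap, Dp, Polynomial.eval_prod]

lemma aeval_eq_evalC (z : Fin N → ℂ) (f : MvPolynomial (Fin N) ℂ) :
    MvPolynomial.aeval z f = eval z f := by
  rw [← coe_aeval_eq_eval]
  rfl

lemma eval_bind (z : Fin N → ℂ) (g : Fin N → MvPolynomial (Fin N) ℂ)
    (f : MvPolynomial (Fin N) ℂ) :
    eval z (bind₁ g f) = eval (fun i => eval z (g i)) f := by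
  rw [← aeval_eq_evalC, aeval_bind₁]
  simp only [aeval_eq_evalC]

lemma eval_DD_eq_zero_of_eq (q : ℂ) (y : Fin N → ℂ) {x : Fin N → ℂ} {a b : Fin N}
    (hab : a ≠ b) (hx : x a = x b) : eval x (DD N q y) = 0 := by
  rw [eval_DD]
  refine Matrix.det_zero_of_row_eq hab ?_
  funext k
  simp [hx]

lemma bind_DD_eq_zero (q : ℂ) (y : Fin N → ℂ) {a b : Fin N} (hab : a ≠ b) :
    bind₁ (Function.update X a (X b)) (DD N q y) = 0 := by
  refine MvPolynomial.funext fun z => ?_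
  rw [eval_bind, map_zero]
  refine eval_DD_eq_zero_of_eq q y hab ?_
  simp [Function.update_apply, hab]

lemma DD_factor (q : ℂ) (y : Fin N → ℂ) : ∃ Q, DD N q y = VV N * Q := by
  classical
  have hdvd : (∏ p ∈ SS N, (X p.2 - X p.1 : MvPolynomial (Fin N) ℂ)) ∣ DD N q y := by
    refine prod_dvd (SS N) (fun p => p.1) (fun p => p.2) (fun p hp => mem_SS.mp hp)
      ?_ _ ?_
    · intro p hp r hr h1 h2
      obtain ⟨p1, p2⟩ := p
      obtain ⟨r1, r2⟩ := r
      cases h1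
      cases h2
      rfl
    · intro p hp
      exact bind_DD_eq_zero q y (ne_of_lt (mem_SS.mp hp))
  rw [← VV] at hdvd
  exact hdvd

lemma eval_DD_eq_zero_special (q : ℂ) (hq : q ≠ 0) (hq2 : q ^ 2 ≠ 1) (y : Fin N → ℂ)
    (hy0 : ∀ j, y j ≠ 0) (hyq : ∀ j k : Fin N, j ≠ k → q ^ 2 * y j ≠ y k)
    {x : Fin N → ℂ} {t i₁ i₂ : Fin N} (h12 : i₁ ≠ i₂)
    (h1 : x i₁ = y t) (h2 : x i₂ = (q ^ 2)⁻¹ * y t) :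
    eval x (DD N q y) = 0 := by
  classical
  rw [eval_DD]
  set M : Matrix (Fin N) (Fin N) ℂ :=
    Matrix.of fun j k : Fin N => Polynomial.eval (x j) (gp N q y (k : ℕ)) with hM
  set aval : ℂ := ∏ m, (q * y t - q⁻¹ * y m) with haval
  set sval : ℂ := -(cc N q 0 * ∏ m, ((q ^ 2)⁻¹ * y t - y m)) with hsval
  have hrow1 : ∀ k : Fin N, M i₁ k = aval * y t ^ (k : ℕ) := by
    intro k
    have hD : (∏ m, (x i₁ - y m)) = 0 :=
      Finset.prod_eq_zero (Finset.mem_univ t) (by rw [h1, sub_self])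
    rw [hM]
    show Polynomial.eval (x i₁) (gp N q y (k : ℕ)) = _
    rw [eval_gp, hD, h1]
    ring
  have hrow2 : ∀ k : Fin N, M i₂ k = sval * y t ^ (k : ℕ) := by
    intro k
    have hA : (∏ m, (q * x i₂ - q⁻¹ * y m)) = 0 := by
      refine Finset.prod_eq_zero (Finset.mem_univ t) ?_
      rw [h2]
      field_simp
      ring
    rw [hM]
    show Polynomial.eval (x i₂) (gp N q y (k : ℕ)) = _
    rw [eval_gp, hA, h2, hsval, cc, cc]
    have hpow : ((q ^ 2)⁻¹ * y t) ^ (k : ℕ) = ((q ^ 2)⁻¹) ^ (k : ℕ) * y t ^ (k : ℕ) :=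
      mul_pow _ _ _
    rw [hpow]
    have hq2k : q ^ (2 * (k : ℕ)) * ((q ^ 2)⁻¹) ^ (k : ℕ) = 1 := by
      rw [pow_mul]
      rw [← mul_pow, mul_inv_cancel₀ (pow_ne_zero 2 hq), one_pow]
    linear_combination (-(q ^ (2 - (N : ℤ)) * (∏ m, ((q ^ 2)⁻¹ * y t - y m)) * y t ^ (k : ℕ))) * hq2k
  have havne : aval ≠ 0 := by
    rw [haval]
    refine Finset.prod_ne_zero_iff.mpr fun m _ => ?_
    have key : q * y t - q⁻¹ * y m = q⁻¹ * (q ^ 2 * y t - y m) := by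
      field_simp
    rw [key]
    refine mul_ne_zero (inv_ne_zero hq) ?_
    rcases eq_or_ne m t with rfl | hmt
    · have : q ^ 2 * y m - y m = (q ^ 2 - 1) * y m := by ring
      rw [this]
      exact mul_ne_zero (sub_ne_zero.mpr hq2) (hy0 m)
    · exact sub_ne_zero.mpr (hyq t m fun h => hmt h.symm)
  have hkey : M i₂ = (sval / aval) • M i₁ := by
    funext k
    rw [hrow2 k, Pi.smul_apply, hrow1 k, smul_eq_mul]
    field_simp
  have hMup : M = M.updateRow i₂ ((sval / aval) • M i₁) := by
    rw [← hkey, Matrix.updateRow_eq_self]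
  rw [hMup, Matrix.det_updateRow_smul, Matrix.det_updateRow_eq_zero h12, mul_zero]

lemma rename_swap_DD (q : ℂ) (y : Fin N → ℂ) {a b : Fin N} (hab : a ≠ b) :
    rename ⇑(Equiv.swap a b) (DD N q y) = -(DD N q y) := by
  refine MvPolynomial.funext fun z => ?_
  rw [eval_rename, map_neg, eval_DD, eval_DD]
  have hsub : (Matrix.of fun j k : Fin N =>
        Polynomial.eval ((z ∘ ⇑(Equiv.swap a b)) j) (gp N q y (k : ℕ)))
      = (Matrix.of fun j k : Fin N =>
        Polynomial.eval (z j) (gp N q y (k : ℕ))).submatrix (⇑(Equiv.swap a b)) id := rfl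
  rw [hsub, Matrix.det_permute, Equiv.Perm.sign_swap hab]
  simp

lemma rename_swap_VV {a b : Fin N} (hab : a ≠ b) :
    rename ⇑(Equiv.swap a b) (VV N) = -(VV N) := by
  refine MvPolynomial.funext fun z => ?_
  rw [eval_rename, map_neg, eval_VV, eval_VV]
  have hsub : Matrix.vandermonde (z ∘ ⇑(Equiv.swap a b))
      = (Matrix.vandermonde z).submatrix (⇑(Equiv.swap a b)) id := rfl
  rw [hsub, Matrix.det_permute, Equiv.Perm.sign_swap hab]
  simp

lemma eval_DD_at_y (q : ℂ) (y : Fin N → ℂ) :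
    eval y (DD N q y) = (∏ j, ∏ m, (q * y j - q⁻¹ * y m)) * (Matrix.vandermonde y).det := by
  rw [eval_DD]
  have hmat : (Matrix.of fun j k : Fin N => Polynomial.eval (y j) (gp N q y (k : ℕ)))
      = Matrix.of fun j k : Fin N =>
          (∏ m, (q * y j - q⁻¹ * y m)) * Matrix.vandermonde y j k := by
    ext j k
    show Polynomial.eval (y j) (gp N q y (k : ℕ)) = _
    rw [eval_gp]
    have hD : (∏ m, (y j - y m)) = 0 :=
      Finset.prod_eq_zero (Finset.mem_univ j) (by rw [sub_self])
    rw [hD, Matrix.of_apply, Matrix.vandermonde_apply]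
    ring
  rw [hmat]
  exact Matrix.det_mul_column _ _

lemma entry_sum (q : ℂ) (y : Fin N → ℂ) (c : Fin N → ℂ) (t : ℂ) :
    (∑ m : Fin N, Polynomial.eval t (gp N q y (m : ℕ)) * c m)
      = (∑ m, c m * t ^ (m : ℕ)) * SixVertexTrig.aTil N q y t
        - q ^ (2 - (N : ℤ)) * (∑ m, c m * (q ^ 2 * t) ^ (m : ℕ)) * SixVertexTrig.dTil N y t := by
  unfold SixVertexTrig.aTil SixVertexTrig.dTil
  simp only [Finset.sum_mul, Finset.mul_sum, ← Finset.sum_sub_distrib]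
  refine Finset.sum_congr rfl fun m _ => ?_
  rw [eval_gp, cc]
  have hpow : (q ^ 2 * t) ^ (m : ℕ) = q ^ (2 * (m : ℕ)) * t ^ (m : ℕ) := by
    rw [mul_pow, ← pow_mul]
  rw [hpow]
  ring

end SVTAux

open SVTAux

open SixVertexTrig in
/-- determinant representation, trigonometric case, first form:
there is a polynomial `P` satisfying the trigonometric DWBC conditions with
`P(x) ⬝ (∏_k y_k) ⬝ det[p_k(x_j)] = det[p_k(x_j) ã(x_j) - q^{-N+2} p_k(q² x_j) d̃(x_j)]`. -/
theorem trig_det_representation_first (N : ℕ) (hN : 1 ≤ N) (q : ℂ) (hq : q ≠ 0)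
    (hq2 : q ^ 2 ≠ 1) (y : Fin N → ℂ) (hy0 : ∀ j, y j ≠ 0)
    (hy : Function.Injective y)
    (hyq : ∀ j k : Fin N, j ≠ k → q ^ 2 * y j ≠ y k)
    (p : Matrix (Fin N) (Fin N) ℂ) (hp : IsUnit p.det) :
    ∃ P : MvPolynomial (Fin N) ℂ, TrigCond N q y P ∧
      ∀ x : Fin N → ℂ,
        MvPolynomial.eval x P * (∏ k, y k) *
            Matrix.det (Matrix.of fun j k : Fin N => pval p k (x j)) =
          Matrix.det (Matrix.of fun j k : Fin N =>
            pval p k (x j) * aTil N q y (x j) -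
              q ^ (2 - (N : ℤ)) * pval p k (q ^ 2 * x j) * dTil N y (x j)) := by
  classical
  open MvPolynomial in
  obtain ⟨QQ, hQQ⟩ := DD_factor q y
  have hyprod : (∏ k, y k) ≠ 0 := Finset.prod_ne_zero_iff.mpr fun k _ => hy0 k
  have hVne : (Matrix.vandermonde y).det ≠ 0 :=
    Matrix.det_vandermonde_ne_zero_iff.mpr hy
  have hDDy := eval_DD_at_y q y
  have hVVy := eval_VV (N := N) y
  have hAne : (∏ j, ∏ m, (q * y j - q⁻¹ * y m)) ≠ 0 := by
    refine Finset.prod_ne_zero_iff.mpr fun j _ => ?_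
    refine Finset.prod_ne_zero_iff.mpr fun m _ => ?_
    have key : q * y j - q⁻¹ * y m = q⁻¹ * (q ^ 2 * y j - y m) := by
      field_simp
    rw [key]
    refine mul_ne_zero (inv_ne_zero hq) ?_
    rcases eq_or_ne m j with rfl | hmj
    · have : q ^ 2 * y m - y m = (q ^ 2 - 1) * y m := by ring
      rw [this]
      exact mul_ne_zero (sub_ne_zero.mpr hq2) (hy0 m)
    · exact sub_ne_zero.mpr (hyq j m fun h => hmj h.symm)
  have hQy : MvPolynomial.eval y QQ = ∏ j, ∏ m, (q * y j - q⁻¹ * y m) := by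
    have h := congrArg (MvPolynomial.eval y) hQQ
    rw [hDDy, map_mul, hVVy] at h
    have h2 : (Matrix.vandermonde y).det * MvPolynomial.eval y QQ
        = (Matrix.vandermonde y).det * ∏ j, ∏ m, (q * y j - q⁻¹ * y m) := by
      rw [← h]; ring
    exact mul_left_cancel₀ hVne h2
  have hDDne : DD N q y ≠ 0 := by
    intro h
    rw [h, map_zero] at hDDy
    exact (mul_ne_zero hAne hVne) hDDy.symm
  have hQne : QQ ≠ 0 := fun h => hDDne (by rw [hQQ, h, mul_zero])
  refine ⟨MvPolynomial.C ((∏ k, y k)⁻¹) * QQ, ⟨?_, ?_, ?_, ?_⟩, ?_⟩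
  · -- symmetric
    have hswap : ∀ a b : Fin N, a ≠ b → rename ⇑(Equiv.swap a b) QQ = QQ := by
      intro a b hab
      have h1 := congrArg (rename ⇑(Equiv.swap a b)) hQQ
      rw [rename_swap_DD q y hab, map_mul, rename_swap_VV hab, neg_mul, neg_inj] at h1
      exact (mul_left_cancel₀ VV_ne_zero (hQQ.symm.trans h1)).symm
    intro σ
    rw [map_mul, rename_C]
    congr 1
    refine Equiv.Perm.swap_induction_on σ (by simp) ?_
    intro f a b hab ih
    rw [Equiv.Perm.coe_mul, ← rename_rename, ih, hswap a b hab]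
  · -- degree
    intro j
    refine (degreeOf_C_mul_le _ _ _).trans ?_
    have h1 : degreeOf j (DD N q y) = (N - 1) + degreeOf j QQ := by
      rw [hQQ, degreeOf_mul_eq_add hN j VV_ne_zero hQne, degreeOf_VV hN j]
    have h2 := degreeOf_DD_le hN q hq y j
    omega
  · -- vanishing
    intro t x i₁ i₂ h12 hx1 hx2
    set g : Fin N → MvPolynomial (Fin N) ℂ :=
      Function.update (Function.update X i₁ (MvPolynomial.C (y t))) i₂
        (MvPolynomial.C ((q ^ 2)⁻¹ * y t)) with hg
    have hgi1 : g i₁ = MvPolynomial.C (y t) := by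
      rw [hg, Function.update_of_ne h12, Function.update_self]
    have hgi2 : g i₂ = MvPolynomial.C ((q ^ 2) ⁻¹ * y t) := by
      rw [hg, Function.update_self]
    have hgother : ∀ u, u ≠ i₁ → u ≠ i₂ → g u = X u := by
      intro u hu1 hu2
      rw [hg, Function.update_of_ne hu2, Function.update_of_ne hu1]
    have hbD : bind₁ g (DD N q y) = 0 := by
      refine MvPolynomial.funext fun z => ?_
      rw [eval_bind, map_zero]
      refine eval_DD_eq_zero_special q hq hq2 y hy0 hyq (t := t) h12 ?_ ?_
      · rw [hgi1, MvPolynomial.eval_C]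
      · rw [hgi2, MvPolynomial.eval_C]
    have habne : y t ≠ (q ^ 2)⁻¹ * y t := by
      intro h
      have h1 : ((q ^ 2)⁻¹ - 1) * y t = 0 := by
        rw [sub_mul, one_mul, ← h]; ring
      rcases mul_eq_zero.mp h1 with h2 | h2
      · exact hq2 (inv_eq_one.mp (by rwa [sub_eq_zero] at h2))
      · exact hy0 t h2
    have hbV : bind₁ g (VV N) ≠ 0 := by
      rw [VV, map_prod]
      refine Finset.prod_ne_zero_iff.mpr fun r hr => ?_
      have hrne : r.1 ≠ r.2 := ne_of_lt (mem_SS.mp hr)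
      rw [map_sub, bind₁_X_right, bind₁_X_right]
      rcases eq_or_ne r.2 i₁ with he2 | he2
      · rcases eq_or_ne r.1 i₁ with he1 | he1
        · exact absurd (he1.trans he2.symm) hrne
        · rcases eq_or_ne r.1 i₂ with he1' | he1'
          · rw [he2, he1', hgi1, hgi2]
            exact C_sub_C_ne habne
          · rw [he2, hgi1, hgother r.1 he1 he1']
            exact C_sub_X_ne _ _
      · rcases eq_or_ne r.2 i₂ with he2' | he2'
        · rcases eq_or_ne r.1 i₁ with he1 | he1
          · rw [he2', he1, hgi1, hgi2]
            exact C_sub_C_ne (Ne.symm habne)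
          · rcases eq_or_ne r.1 i₂ with he1' | he1'
            · exact absurd (he1'.trans he2'.symm) hrne
            · rw [he2', hgi2, hgother r.1 he1 he1']
              exact C_sub_X_ne _ _
        · rw [hgother r.2 he2 he2']
          rcases eq_or_ne r.1 i₁ with he1 | he1
          · rw [he1, hgi1]
            exact X_sub_C_ne _ _
          · rcases eq_or_ne r.1 i₂ with he1' | he1'
            · rw [he1', hgi2]
              exact X_sub_C_ne _ _
            · rw [hgother r.1 he1 he1']
              exact X_sub_X_ne (Ne.symm hrne)
    have hbQ : bind₁ g QQ = 0 := by
      have h := congrArg (bind₁ g) hQQ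
      rw [hbD, map_mul] at h
      exact (mul_eq_zero.mp h.symm).resolve_left hbV
    rw [map_mul, MvPolynomial.eval_C]
    have hxg : (fun i => MvPolynomial.eval x (g i)) = x := by
      funext u
      rcases eq_or_ne u i₂ with rfl | hu2
      · rw [hgi2, MvPolynomial.eval_C, ← hx2]
      · rcases eq_or_ne u i₁ with rfl | hu1
        · rw [hgi1, MvPolynomial.eval_C, ← hx1]
        · rw [hgother u hu1 hu2, MvPolynomial.eval_X]
    have hQx : MvPolynomial.eval x QQ = 0 := by
      have h := congrArg (MvPolynomial.eval x) hbQ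
      rw [eval_bind, map_zero, hxg] at h
      exact h
    rw [hQx, mul_zero]
  · -- value at y
    rw [map_mul, MvPolynomial.eval_C, hQy]
    have hexp : ∀ j, (∏ m, (q * y j - q⁻¹ * y m))
        = ((q - q⁻¹) * y j) * ∏ m ∈ Finset.univ.erase j, (q * y j - q⁻¹ * y m) := by
      intro j
      rw [← Finset.mul_prod_erase Finset.univ _ (Finset.mem_univ j)]
      congr 1
      ring
    rw [Finset.prod_congr rfl fun j _ => hexp j, Finset.prod_mul_distrib,
      Finset.prod_mul_distrib, Finset.prod_const]
    simp only [Finset.card_univ, Fintype.card_fin]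
    field_simp
  · -- determinant identity
    intro x
    have hMat1 : (Matrix.of fun j k : Fin N => pval p k (x j))
        = (Matrix.vandermonde x) * p.transpose := by
      ext j k
      rw [Matrix.mul_apply, Matrix.of_apply, pval]
      exact Finset.sum_congr rfl fun m _ => by
        rw [Matrix.vandermonde_apply, Matrix.transpose_apply, mul_comm]
    have hMat2 : (Matrix.of fun j k : Fin N =>
          pval p k (x j) * aTil N q y (x j) -
            q ^ (2 - (N : ℤ)) * pval p k (q ^ 2 * x j) * dTil N y (x j))
        = (Matrix.of fun j m : Fin N => Polynomial.eval (x j) (gp N q y (m : ℕ))) * p.transpose := by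
      ext j k
      rw [Matrix.mul_apply, Matrix.of_apply]
      have h := entry_sum (N := N) q y (fun m => p k m) (x j)
      simp only [Matrix.of_apply, Matrix.transpose_apply]
      rw [h]
      rfl
    rw [hMat1, hMat2, Matrix.det_mul, Matrix.det_mul, Matrix.det_transpose]
    have hDx : Matrix.det (Matrix.of fun j m : Fin N => Polynomial.eval (x j) (gp N q y (m : ℕ)))
        = MvPolynomial.eval x (DD N q y) := (eval_DD q y x).symm
    rw [hDx, hQQ]
    simp only [map_mul, MvPolynomial.eval_C, eval_VV]
    field_simp
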